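/- Kantorovich duality in the finite case: for a finite metric space (X, ρ) and v ∈ V₀ with positive part u = v⁺ and negative part w = v⁻ (so ∑u(x) = ∑w(x)), the optimal transport cost min_{ψ} ∑_{x,y} ρ(x,y)ψ(x,y) over all nonnegative matrices ψ with row sums u and column sums w equals max{∑_x f(x)v(x) : f : X → ℝ, |f(x) - f(y)| ≤ ρ(x,y) for all x,y}. -/

import Mathlib

open Finset
set_option linter.unusedSectionVars false

section OT

variable {X : Type*} [Fintype X] [DecidableEq X]

/-- The set of achievable transport costs. -/
def costSet (ρ : X → X → ℝ) (v : X → ℝ) : Set ℝ :=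
  {c : ℝ | ∃ ψ : X → X → ℝ,
      (∀ x y : X, 0 ≤ ψ x y) ∧
      (∀ x : X, ∑ y : X, ψ x y = max (v x) 0) ∧
      (∀ y : X, ∑ x : X, ψ x y = max (-v y) 0) ∧
      c = ∑ x : X, ∑ y : X, ρ x y * ψ x y}

lemma pos_sub_neg (a : ℝ) : max a 0 - max (-a) 0 = a := by
  rcases le_total a 0 with h | h
  · rw [max_eq_right h, max_eq_left (neg_nonneg.2 h)]; ring
  · rw [max_eq_left h, max_eq_right (neg_nonpos.2 h)]; ring

variable {ρ : X → X → ℝ}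

lemma rho_nonneg (hpos : ∀ x y : X, x ≠ y → 0 < ρ x y) (hzero : ∀ x : X, ρ x x = 0)
    (x y : X) : 0 ≤ ρ x y := by
  rcases eq_or_ne x y with rfl | h
  · simp [hzero x]
  · exact (hpos x y h).le

lemma costSet_nonneg (hpos : ∀ x y : X, x ≠ y → 0 < ρ x y) (hzero : ∀ x : X, ρ x x = 0)
    {v : X → ℝ} {c : ℝ} (hc : c ∈ costSet ρ v) : 0 ≤ c := by
  obtain ⟨ψ, hψ, -, -, rfl⟩ := hc
  exact Finset.sum_nonneg fun x _ => Finset.sum_nonneg fun y _ =>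
    mul_nonneg (rho_nonneg hpos hzero x y) (hψ x y)

lemma costSet_nonempty {v : X → ℝ} (hv : ∑ x : X, v x = 0) : (costSet ρ v).Nonempty := by
  set S : ℝ := ∑ x : X, max (v x) 0 with hS
  have hS0 : 0 ≤ S := Finset.sum_nonneg fun x _ => le_max_right _ _
  have hS2 : ∑ x : X, max (-v x) 0 = S := by
    have : ∀ x : X, max (-v x) 0 = max (v x) 0 - v x := by
      intro x
      have := pos_sub_neg (v x)
      linarith
    simp only [this, Finset.sum_sub_distrib, hv, sub_zero, hS]
  rcases eq_or_lt_of_le hS0 with hS0' | hS0'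
  · -- S = 0, all masses vanish; use ψ = 0
    have hpos0 : ∀ x : X, max (v x) 0 = 0 := by
      intro x
      have := (Finset.sum_eq_zero_iff_of_nonneg (fun x _ => le_max_right (v x) 0)).1 hS0'.symm
      exact this x (mem_univ x)
    have hneg0 : ∀ x : X, max (-v x) 0 = 0 := by
      intro x
      have h' : ∑ x : X, max (-v x) 0 = 0 := by rw [hS2, ← hS0']
      exact (Finset.sum_eq_zero_iff_of_nonneg (fun x _ => le_max_right (-v x) 0)).1 h' x
        (mem_univ x)
    exact ⟨0, fun _ _ => 0, fun x y => le_refl 0, by simp [hpos0], by simp [hneg0], by simp⟩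
  · refine ⟨_, fun x y => max (v x) 0 * max (-v y) 0 / S, fun x y => by positivity, ?_, ?_, rfl⟩
    · intro x
      rw [← Finset.sum_div, ← Finset.mul_sum, hS2, mul_div_assoc, div_self hS0'.ne',
        mul_one]
    · intro y
      rw [← Finset.sum_div, ← Finset.sum_mul, ← hS, mul_comm, mul_div_assoc,
        div_self hS0'.ne', mul_one]


lemma exists_least_costSet (hpos : ∀ x y : X, x ≠ y → 0 < ρ x y)
    (hzero : ∀ x : X, ρ x x = 0) {v : X → ℝ} (hv : ∑ x : X, v x = 0) :
    ∃ C : ℝ, IsLeast (costSet ρ v) C := by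
  classical
  set F : Set (X → X → ℝ) := {ψ | (∀ x y : X, 0 ≤ ψ x y) ∧
      (∀ x : X, ∑ y : X, ψ x y = max (v x) 0) ∧
      (∀ y : X, ∑ x : X, ψ x y = max (-v y) 0)} with hF
  have hFne : F.Nonempty := by
    obtain ⟨c, ψ, h1, h2, h3, -⟩ := costSet_nonempty (ρ := ρ) hv
    exact ⟨ψ, h1, h2, h3⟩
  have happ : ∀ x y : X, Continuous fun ψ : X → X → ℝ => ψ x y := fun x y =>
    (continuous_apply y).comp (continuous_apply x)
  have hclosed : IsClosed F := by
    have hF' : F = (⋂ x : X, ⋂ y : X, {ψ : X → X → ℝ | 0 ≤ ψ x y}) ∩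
        ((⋂ x : X, {ψ : X → X → ℝ | ∑ y : X, ψ x y = max (v x) 0}) ∩
         (⋂ y : X, {ψ : X → X → ℝ | ∑ x : X, ψ x y = max (-v y) 0})) := by
      ext ψ
      simp only [hF, Set.mem_setOf_eq, Set.mem_inter_iff, Set.mem_iInter]
    rw [hF']
    refine IsClosed.inter (isClosed_iInter fun x => isClosed_iInter fun y =>
        isClosed_le continuous_const (happ x y)) (IsClosed.inter ?_ ?_)
    · exact isClosed_iInter fun x =>
        isClosed_eq (continuous_finset_sum _ fun y _ => happ x y) continuous_const
    · exact isClosed_iInter fun y =>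
        isClosed_eq (continuous_finset_sum _ fun x _ => happ x y) continuous_const
  set S : ℝ := ∑ x : X, max (v x) 0 with hS
  have hS0 : 0 ≤ S := Finset.sum_nonneg fun x _ => le_max_right _ _
  have hbdd : Bornology.IsBounded F := by
    refine (Metric.isBounded_closedBall (x := (0 : X → X → ℝ)) (r := S)).subset ?_
    intro ψ hψ
    obtain ⟨h1, h2, -⟩ := hψ
    rw [Metric.mem_closedBall]
    refine dist_pi_le_iff hS0 |>.2 fun x => dist_pi_le_iff hS0 |>.2 fun y => ?_
    rw [Pi.zero_apply, Pi.zero_apply, Real.dist_eq, sub_zero, abs_of_nonneg (h1 x y)]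
    calc ψ x y ≤ ∑ y' : X, ψ x y' :=
          Finset.single_le_sum (fun y' _ => h1 x y') (mem_univ y)
      _ = max (v x) 0 := h2 x
      _ ≤ S := Finset.single_le_sum (fun x' (_ : x' ∈ univ) => le_max_right (v x') 0) (mem_univ x)
  have hcont : Continuous fun ψ : X → X → ℝ => ∑ x : X, ∑ y : X, ρ x y * ψ x y :=
    continuous_finset_sum _ fun x _ => continuous_finset_sum _ fun y _ =>
      continuous_const.mul (happ x y)
  obtain ⟨ψ₀, hψ₀F, hmin⟩ :=
    (Metric.isCompact_of_isClosed_isBounded hclosed hbdd).exists_isMinOn hFne hcont.continuousOn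
  refine ⟨∑ x : X, ∑ y : X, ρ x y * ψ₀ x y, ⟨ψ₀, hψ₀F.1, hψ₀F.2.1, hψ₀F.2.2, rfl⟩, ?_⟩
  rintro c ⟨ψ, h1, h2, h3, rfl⟩
  exact hmin (⟨h1, h2, h3⟩ : ψ ∈ F)

lemma weak_duality {v : X → ℝ} {f : X → ℝ} (hf : ∀ x y : X, |f x - f y| ≤ ρ x y)
    {c : ℝ} (hc : c ∈ costSet ρ v) : ∑ x : X, f x * v x ≤ c := by
  obtain ⟨ψ, h1, h2, h3, rfl⟩ := hc
  have key : ∑ x : X, f x * v x = ∑ x : X, ∑ y : X, (f x - f y) * ψ x y := by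
    have : ∀ x : X, f x * v x = f x * max (v x) 0 - f x * max (-v x) 0 := by
      intro x
      rw [← mul_sub, pos_sub_neg]
    rw [Finset.sum_congr rfl fun x _ => this x, Finset.sum_sub_distrib]
    have e1 : ∑ x : X, f x * max (v x) 0 = ∑ x : X, ∑ y : X, f x * ψ x y := by
      refine Finset.sum_congr rfl fun x _ => ?_
      rw [← Finset.mul_sum, h2 x]
    have e2 : ∑ x : X, f x * max (-v x) 0 = ∑ x : X, ∑ y : X, f y * ψ x y := by
      rw [Finset.sum_comm]
      refine Finset.sum_congr rfl fun y _ => ?_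
      rw [← Finset.mul_sum, h3 y]
    rw [e1, e2, ← Finset.sum_sub_distrib]
    refine Finset.sum_congr rfl fun x _ => ?_
    rw [← Finset.sum_sub_distrib]
    refine Finset.sum_congr rfl fun y _ => ?_
    ring
  rw [key]
  refine Finset.sum_le_sum fun x _ => Finset.sum_le_sum fun y _ => ?_
  exact mul_le_mul_of_nonneg_right (le_trans (le_abs_self _) (hf x y)) (h1 x y)


lemma row_ite (p q : X) (t : ℝ) (a : X) :
    ∑ b : X, (if a = p ∧ b = q then t else 0) = if a = p then t else 0 := by
  by_cases h : a = p <;> simp [h]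

lemma col_ite (p q : X) (t : ℝ) (b : X) :
    ∑ a : X, (if a = p ∧ b = q then t else 0) = if b = q then t else 0 := by
  by_cases h : b = q <;> simp [h]

lemma tot_ite (ρ : X → X → ℝ) (p q : X) (t : ℝ) :
    ∑ a : X, ∑ b : X, (if a = p ∧ b = q then ρ a b * t else 0) = ρ p q * t := by
  have h : ∀ a : X, ∑ b : X, (if a = p ∧ b = q then ρ a b * t else 0)
      = if a = p then ρ a q * t else 0 := by
    intro a; by_cases h : a = p <;> simp [h]
  simp only [h]
  simp

lemma drain (hzero : ∀ x : X, ρ x x = 0) (htri : ∀ x y z : X, ρ x z ≤ ρ x y + ρ y z)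
    (x₀ : X) :
    ∀ n : ℕ, ∀ ψ : X → X → ℝ, (∀ a b : X, 0 ≤ ψ a b) →
    (univ.filter fun y => ψ x₀ y ≠ 0).card + (univ.filter fun z => ψ z x₀ ≠ 0).card ≤ n →
    ∃ ψ' : X → X → ℝ, (∀ a b : X, 0 ≤ ψ' a b) ∧
      (∑ a : X, ∑ b : X, ρ a b * ψ' a b ≤ ∑ a : X, ∑ b : X, ρ a b * ψ a b) ∧
      (∀ x : X, (∑ y : X, ψ' x y) - (∑ y : X, ψ' y x)
        = (∑ y : X, ψ x y) - (∑ y : X, ψ y x)) ∧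
      (∀ x : X, x ≠ x₀ →
        (∑ y : X, ψ' x y) = (∑ y : X, ψ x y) ∧ (∑ y : X, ψ' y x) = (∑ y : X, ψ y x)) ∧
      ((∑ y : X, ψ' x₀ y) = 0 ∨ (∑ y : X, ψ' y x₀) = 0) := by
  intro n
  induction n with
  | zero =>
    intro ψ hnn hcard
    refine ⟨ψ, hnn, le_rfl, fun _ => rfl, fun _ _ => ⟨rfl, rfl⟩, Or.inl ?_⟩
    have h0 : (univ.filter fun y => ψ x₀ y ≠ 0).card = 0 := by omega
    have hemp := Finset.card_eq_zero.1 h0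
    refine Finset.sum_eq_zero fun y _ => ?_
    by_contra h
    have hy : y ∈ univ.filter fun y => ψ x₀ y ≠ 0 := by simp [h]
    simp [hemp] at hy
  | succ n IH =>
    intro ψ hnn hcard
    by_cases hdone : (∑ y : X, ψ x₀ y) = 0 ∨ (∑ y : X, ψ y x₀) = 0
    · exact ⟨ψ, hnn, le_rfl, fun _ => rfl, fun _ _ => ⟨rfl, rfl⟩, hdone⟩
    push_neg at hdone
    obtain ⟨hr, hc⟩ := hdone
    by_cases hdiag : ψ x₀ x₀ = 0
    · -- main case: pick y ≠ x₀ in the row, z ≠ x₀ in the column, shortcut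
      obtain ⟨y, -, hy⟩ := Finset.exists_ne_zero_of_sum_ne_zero hr
      obtain ⟨z, -, hz⟩ := Finset.exists_ne_zero_of_sum_ne_zero hc
      have hyx0 : y ≠ x₀ := fun h => hy (h ▸ hdiag)
      have hzx0 : z ≠ x₀ := fun h => hz (h ▸ hdiag)
      set ε : ℝ := min (ψ x₀ y) (ψ z x₀) with hε
      have hψy : 0 < ψ x₀ y := (hnn x₀ y).lt_of_ne (Ne.symm hy)
      have hψz : 0 < ψ z x₀ := (hnn z x₀).lt_of_ne (Ne.symm hz)
      have hε0 : 0 < ε := lt_min hψy hψz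
      set ψ₁ : X → X → ℝ := fun a b => ψ a b + (if a = z ∧ b = y then ε else 0)
        - (if a = x₀ ∧ b = y then ε else 0) - (if a = z ∧ b = x₀ then ε else 0) with hψ₁
      have hnn₁ : ∀ a b : X, 0 ≤ ψ₁ a b := by
        intro a b
        by_cases h2 : a = x₀ ∧ b = y
        · have e1 : ¬(a = z ∧ b = y) := fun h => hzx0 (h.1.symm.trans h2.1)
          have e3 : ¬(a = z ∧ b = x₀) := fun h => hzx0 (h.1.symm.trans h2.1)
          simp only [hψ₁, if_pos h2, if_neg e1, if_neg e3]
          rw [h2.1, h2.2]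
          have h5 := min_le_left (ψ x₀ y) (ψ z x₀)
          rw [← hε] at h5
          linarith
        · by_cases h3 : a = z ∧ b = x₀
          · have e1 : ¬(a = z ∧ b = y) := fun h => hyx0 (h.2.symm.trans h3.2)
            simp only [hψ₁, if_pos h3, if_neg e1, if_neg h2]
            rw [h3.1, h3.2]
            have h5 := min_le_right (ψ x₀ y) (ψ z x₀)
            rw [← hε] at h5
            linarith
          · simp only [hψ₁, if_neg h2, if_neg h3]
            by_cases h1 : a = z ∧ b = y
            · simp only [if_pos h1]; linarith [hnn a b]
            · simp only [if_neg h1]; linarith [hnn a b]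
      have hrow : ∀ a : X, (∑ b : X, ψ₁ a b)
          = (∑ b : X, ψ a b) - (if a = x₀ then ε else 0) := by
        intro a
        simp only [hψ₁]
        rw [Finset.sum_sub_distrib, Finset.sum_sub_distrib, Finset.sum_add_distrib,
          row_ite, row_ite, row_ite]
        by_cases h : a = x₀ <;> by_cases h' : a = z <;> simp [h, h'] <;> ring
      have hcol : ∀ b : X, (∑ a : X, ψ₁ a b)
          = (∑ a : X, ψ a b) - (if b = x₀ then ε else 0) := by
        intro b
        simp only [hψ₁]
        rw [Finset.sum_sub_distrib, Finset.sum_sub_distrib, Finset.sum_add_distrib,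
          col_ite, col_ite, col_ite]
        by_cases h : b = x₀ <;> by_cases h' : b = y <;> simp [h, h'] <;> ring
      have hcost₁ : ∑ a : X, ∑ b : X, ρ a b * ψ₁ a b ≤ ∑ a : X, ∑ b : X, ρ a b * ψ a b := by
        have expand : ∀ a b : X, ρ a b * ψ₁ a b = ρ a b * ψ a b
            + (if a = z ∧ b = y then ρ a b * ε else 0)
            - (if a = x₀ ∧ b = y then ρ a b * ε else 0)
            - (if a = z ∧ b = x₀ then ρ a b * ε else 0) := by
          intro a b
          simp only [hψ₁, mul_sub, mul_add, mul_ite, mul_zero]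
        simp only [expand]
        simp only [Finset.sum_sub_distrib, Finset.sum_add_distrib]
        rw [tot_ite, tot_ite, tot_ite]
        nlinarith [htri z x₀ y, hε0.le]
      -- the row filter does not grow and the column filter does not grow
      have hrowpt : ∀ b : X, ψ₁ x₀ b = ψ x₀ b - (if b = y then ε else 0) := by
        intro b
        simp only [hψ₁, if_neg (fun h : x₀ = z ∧ b = y => hzx0 h.1.symm),
          if_neg (fun h : x₀ = z ∧ b = x₀ => hzx0 h.1.symm)]
        by_cases h : b = y <;> simp [h]
      have hcolpt : ∀ a : X, ψ₁ a x₀ = ψ a x₀ - (if a = z then ε else 0) := by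
        intro a
        simp only [hψ₁, if_neg (fun h : a = z ∧ x₀ = y => hyx0 h.2.symm),
          if_neg (fun h : a = x₀ ∧ x₀ = y => hyx0 h.2.symm)]
        by_cases h : a = z <;> simp [h]
      have hsubrow : (univ.filter fun b => ψ₁ x₀ b ≠ 0) ⊆ (univ.filter fun b => ψ x₀ b ≠ 0) := by
        intro b hb
        simp only [Finset.mem_filter, Finset.mem_univ, true_and] at hb ⊢
        intro h0
        rcases eq_or_ne b y with rfl | hby
        · exact hy h0
        · rw [hrowpt b, if_neg hby, h0, sub_zero] at hb; exact hb rfl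
      have hsubcol : (univ.filter fun a => ψ₁ a x₀ ≠ 0) ⊆ (univ.filter fun a => ψ a x₀ ≠ 0) := by
        intro a ha
        simp only [Finset.mem_filter, Finset.mem_univ, true_and] at ha ⊢
        intro h0
        rcases eq_or_ne a z with rfl | haz
        · exact hz h0
        · rw [hcolpt a, if_neg haz, h0, sub_zero] at ha; exact ha rfl
      have hcard₁ : (univ.filter fun b => ψ₁ x₀ b ≠ 0).card
          + (univ.filter fun a => ψ₁ a x₀ ≠ 0).card ≤ n := by
        rcases min_cases (ψ x₀ y) (ψ z x₀) with ⟨hmin, -⟩ | ⟨hmin, -⟩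
        · -- ε = ψ x₀ y : y leaves the row filter
          have hy1 : ψ₁ x₀ y = 0 := by rw [hrowpt y, if_pos rfl, hε, hmin, sub_self]
          have hlt : (univ.filter fun b => ψ₁ x₀ b ≠ 0).card
              < (univ.filter fun b => ψ x₀ b ≠ 0).card := by
            refine Finset.card_lt_card ((Finset.ssubset_iff_of_subset hsubrow).2 ?_)
            exact ⟨y, by simp [hy], by simp [hy1]⟩
          have := Finset.card_le_card hsubcol
          omega
        · have hz1 : ψ₁ z x₀ = 0 := by rw [hcolpt z, if_pos rfl, hε, hmin, sub_self]
          have hlt : (univ.filter fun a => ψ₁ a x₀ ≠ 0).card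
              < (univ.filter fun a => ψ a x₀ ≠ 0).card := by
            refine Finset.card_lt_card ((Finset.ssubset_iff_of_subset hsubcol).2 ?_)
            exact ⟨z, by simp [hz], by simp [hz1]⟩
          have := Finset.card_le_card hsubrow
          omega
      obtain ⟨ψ', h1', h2', h3', h4', h5'⟩ := IH ψ₁ hnn₁ hcard₁
      refine ⟨ψ', h1', h2'.trans hcost₁, ?_, ?_, h5'⟩
      · intro x
        rw [h3' x, hrow x, hcol x]
        ring
      · intro x hx
        obtain ⟨hr', hc'⟩ := h4' x hx
        rw [hr', hc', hrow x, hcol x, if_neg hx]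
        exact ⟨by ring, by ring⟩
    · -- diagonal case: remove the diagonal entry at x₀
      set d : ℝ := ψ x₀ x₀ with hd
      set ψ₁ : X → X → ℝ := fun a b => ψ a b - (if a = x₀ ∧ b = x₀ then d else 0) with hψ₁
      have hnn₁ : ∀ a b : X, 0 ≤ ψ₁ a b := by
        intro a b
        by_cases h : a = x₀ ∧ b = x₀
        · simp only [hψ₁, if_pos h, h.1, h.2, hd]
          simp
        · simp only [hψ₁, if_neg h, sub_zero]; exact hnn a b
      have hrow : ∀ a : X, (∑ b : X, ψ₁ a b)
          = (∑ b : X, ψ a b) - (if a = x₀ then d else 0) := by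
        intro a
        simp only [hψ₁]
        rw [Finset.sum_sub_distrib, row_ite]
      have hcol : ∀ b : X, (∑ a : X, ψ₁ a b)
          = (∑ a : X, ψ a b) - (if b = x₀ then d else 0) := by
        intro b
        simp only [hψ₁]
        rw [Finset.sum_sub_distrib, col_ite]
      have hcost₁ : ∑ a : X, ∑ b : X, ρ a b * ψ₁ a b ≤ ∑ a : X, ∑ b : X, ρ a b * ψ a b := by
        have expand : ∀ a b : X, ρ a b * ψ₁ a b = ρ a b * ψ a b
            - (if a = x₀ ∧ b = x₀ then ρ a b * d else 0) := by
          intro a b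
          simp only [hψ₁, mul_sub, mul_ite, mul_zero]
        simp only [expand]
        simp only [Finset.sum_sub_distrib]
        rw [tot_ite, hzero x₀, zero_mul, sub_zero]
      have hrowpt : ∀ b : X, ψ₁ x₀ b = ψ x₀ b - (if b = x₀ then d else 0) := by
        intro b
        simp only [hψ₁, true_and]
      have hcolpt : ∀ a : X, ψ₁ a x₀ = ψ a x₀ - (if a = x₀ then d else 0) := by
        intro a
        simp only [hψ₁, and_true]
      have hsubrow : (univ.filter fun b => ψ₁ x₀ b ≠ 0)
          ⊆ (univ.filter fun b => ψ x₀ b ≠ 0).erase x₀ := by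
        intro b hb
        simp only [Finset.mem_filter, Finset.mem_univ, true_and] at hb
        rcases eq_or_ne b x₀ with rfl | hbx
        · rw [hrowpt b, if_pos rfl, hd, sub_self] at hb; exact absurd rfl hb
        · rw [hrowpt b, if_neg hbx, sub_zero] at hb
          exact Finset.mem_erase.2 ⟨hbx, by simp [hb]⟩
      have hsubcol : (univ.filter fun a => ψ₁ a x₀ ≠ 0)
          ⊆ (univ.filter fun a => ψ a x₀ ≠ 0).erase x₀ := by
        intro a ha
        simp only [Finset.mem_filter, Finset.mem_univ, true_and] at ha
        rcases eq_or_ne a x₀ with rfl | hax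
        · rw [hcolpt a, if_pos rfl, hd, sub_self] at ha; exact absurd rfl ha
        · rw [hcolpt a, if_neg hax, sub_zero] at ha
          exact Finset.mem_erase.2 ⟨hax, by simp [ha]⟩
      have hcard₁ : (univ.filter fun b => ψ₁ x₀ b ≠ 0).card
          + (univ.filter fun a => ψ₁ a x₀ ≠ 0).card ≤ n := by
        have hm1 : x₀ ∈ univ.filter fun b => ψ x₀ b ≠ 0 := by
          simp only [Finset.mem_filter, Finset.mem_univ, true_and]; exact hdiag
        have hm2 : x₀ ∈ univ.filter fun a => ψ a x₀ ≠ 0 := by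
          simp only [Finset.mem_filter, Finset.mem_univ, true_and]; exact hdiag
        have e1 := Finset.card_le_card hsubrow
        have e2 := Finset.card_le_card hsubcol
        rw [Finset.card_erase_of_mem hm1] at e1
        rw [Finset.card_erase_of_mem hm2] at e2
        have p1 : 1 ≤ (univ.filter fun b => ψ x₀ b ≠ 0).card := Finset.card_pos.2 ⟨x₀, hm1⟩
        have p2 : 1 ≤ (univ.filter fun a => ψ a x₀ ≠ 0).card := Finset.card_pos.2 ⟨x₀, hm2⟩
        omega
      obtain ⟨ψ', h1', h2', h3', h4', h5'⟩ := IH ψ₁ hnn₁ hcard₁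
      refine ⟨ψ', h1', h2'.trans hcost₁, ?_, ?_, h5'⟩
      · intro x
        rw [h3' x, hrow x, hcol x]
        ring
      · intro x hx
        obtain ⟨hr', hc'⟩ := h4' x hx
        rw [hr', hc', hrow x, hcol x, if_neg hx]
        exact ⟨by ring, by ring⟩


lemma settle (hzero : ∀ x : X, ρ x x = 0) (htri : ∀ x y z : X, ρ x z ≤ ρ x y + ρ y z) :
    ∀ m : ℕ, ∀ ψ : X → X → ℝ, (∀ a b : X, 0 ≤ ψ a b) →
    (univ.filter fun x : X => (∑ y : X, ψ x y) ≠ 0 ∧ (∑ y : X, ψ y x) ≠ 0).card ≤ m →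
    ∃ ψ' : X → X → ℝ, (∀ a b : X, 0 ≤ ψ' a b) ∧
      (∑ a : X, ∑ b : X, ρ a b * ψ' a b ≤ ∑ a : X, ∑ b : X, ρ a b * ψ a b) ∧
      (∀ x : X, (∑ y : X, ψ' x y) - (∑ y : X, ψ' y x)
        = (∑ y : X, ψ x y) - (∑ y : X, ψ y x)) ∧
      (∀ x : X, (∑ y : X, ψ' x y) = 0 ∨ (∑ y : X, ψ' y x) = 0) := by
  intro m
  induction m with
  | zero =>
    intro ψ hnn hcard
    refine ⟨ψ, hnn, le_rfl, fun _ => rfl, fun x => ?_⟩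
    by_contra h
    push_neg at h
    have hx : x ∈ univ.filter fun x : X => (∑ y : X, ψ x y) ≠ 0 ∧ (∑ y : X, ψ y x) ≠ 0 := by
      simp only [Finset.mem_filter, Finset.mem_univ, true_and]
      exact h
    have := Finset.card_pos.2 ⟨x, hx⟩
    omega
  | succ m IH =>
    intro ψ hnn hcard
    by_cases hemp : ∀ x : X, (∑ y : X, ψ x y) = 0 ∨ (∑ y : X, ψ y x) = 0
    · exact ⟨ψ, hnn, le_rfl, fun _ => rfl, hemp⟩
    push_neg at hemp
    obtain ⟨x₀, hx₀r, hx₀c⟩ := hemp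
    obtain ⟨ψ₁, h1, h2, h3, h4, h5⟩ := drain hzero htri x₀
      ((univ.filter fun y => ψ x₀ y ≠ 0).card + (univ.filter fun z => ψ z x₀ ≠ 0).card)
      ψ hnn le_rfl
    have hsub : (univ.filter fun x : X => (∑ y : X, ψ₁ x y) ≠ 0 ∧ (∑ y : X, ψ₁ y x) ≠ 0)
        ⊆ (univ.filter fun x : X => (∑ y : X, ψ x y) ≠ 0 ∧ (∑ y : X, ψ y x) ≠ 0).erase x₀ := by
      intro x hx
      simp only [Finset.mem_filter, Finset.mem_univ, true_and] at hx
      rcases eq_or_ne x x₀ with rfl | hxx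
      · rcases h5 with h | h
        · exact absurd h hx.1
        · exact absurd h hx.2
      · obtain ⟨e1, e2⟩ := h4 x hxx
        refine Finset.mem_erase.2 ⟨hxx, ?_⟩
        simp only [Finset.mem_filter, Finset.mem_univ, true_and]
        rw [e1, e2] at hx
        exact hx
    have hm : x₀ ∈ univ.filter fun x : X => (∑ y : X, ψ x y) ≠ 0 ∧ (∑ y : X, ψ y x) ≠ 0 := by
      simp only [Finset.mem_filter, Finset.mem_univ, true_and]
      exact ⟨hx₀r, hx₀c⟩
    have hcard₁ : (univ.filter fun x : X =>
        (∑ y : X, ψ₁ x y) ≠ 0 ∧ (∑ y : X, ψ₁ y x) ≠ 0).card ≤ m := by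
      have e1 := Finset.card_le_card hsub
      rw [Finset.card_erase_of_mem hm] at e1
      have p1 := Finset.card_pos.2 ⟨x₀, hm⟩
      omega
    obtain ⟨ψ', g1, g2, g3, g4⟩ := IH ψ₁ h1 hcard₁
    exact ⟨ψ', g1, g2.trans h2, fun x => (g3 x).trans (h3 x), g4⟩

lemma toPlan (hzero : ∀ x : X, ρ x x = 0) (htri : ∀ x y z : X, ρ x z ≤ ρ x y + ρ y z)
    (ψ : X → X → ℝ) (hnn : ∀ a b : X, 0 ≤ ψ a b) (v : X → ℝ)
    (hnet : ∀ x : X, (∑ y : X, ψ x y) - (∑ y : X, ψ y x) = v x) :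
    ∃ c ∈ costSet ρ v, c ≤ ∑ a : X, ∑ b : X, ρ a b * ψ a b := by
  obtain ⟨ψ', h1, h2, h3, h4⟩ := settle hzero htri
    (univ.filter fun x : X => (∑ y : X, ψ x y) ≠ 0 ∧ (∑ y : X, ψ y x) ≠ 0).card ψ hnn le_rfl
  have hnet' : ∀ x : X, (∑ y : X, ψ' x y) - (∑ y : X, ψ' y x) = v x := fun x =>
    (h3 x).trans (hnet x)
  have hrow : ∀ x : X, ∑ y : X, ψ' x y = max (v x) 0 := by
    intro x
    have hr0 : 0 ≤ ∑ y : X, ψ' x y := Finset.sum_nonneg fun y _ => h1 x y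
    have hc0 : 0 ≤ ∑ y : X, ψ' y x := Finset.sum_nonneg fun y _ => h1 y x
    rcases h4 x with h | h
    · rw [h]
      have : v x ≤ 0 := by rw [← hnet' x, h]; linarith
      rw [max_eq_right this]
    · rw [max_eq_left (by rw [← hnet' x, h]; linarith)]
      rw [← hnet' x, h, sub_zero]
  have hcol : ∀ x : X, ∑ y : X, ψ' y x = max (-v x) 0 := by
    intro x
    have hr0 : 0 ≤ ∑ y : X, ψ' x y := Finset.sum_nonneg fun y _ => h1 x y
    have hc0 : 0 ≤ ∑ y : X, ψ' y x := Finset.sum_nonneg fun y _ => h1 y x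
    rcases h4 x with h | h
    · rw [max_eq_left (by rw [← hnet' x, h]; linarith)]
      rw [← hnet' x, h, zero_sub, neg_neg]
    · rw [h]
      have : -v x ≤ 0 := by rw [← hnet' x, h]; linarith
      rw [max_eq_right this]
  exact ⟨∑ a : X, ∑ b : X, ρ a b * ψ' a b, ⟨ψ', h1, hrow, hcol, rfl⟩, h2⟩


lemma isLeast_sInf_costSet (hpos : ∀ x y : X, x ≠ y → 0 < ρ x y)
    (hzero : ∀ x : X, ρ x x = 0) {v : X → ℝ} (hv : ∑ x : X, v x = 0) :
    IsLeast (costSet ρ v) (sInf (costSet ρ v)) := by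
  obtain ⟨C, hC⟩ := exists_least_costSet hpos hzero hv
  rwa [hC.csInf_eq]

lemma sInf_costSet_nonneg (hpos : ∀ x y : X, x ≠ y → 0 < ρ x y)
    (hzero : ∀ x : X, ρ x x = 0) {v : X → ℝ} (hv : ∑ x : X, v x = 0) :
    0 ≤ sInf (costSet ρ v) :=
  costSet_nonneg hpos hzero (isLeast_sInf_costSet hpos hzero hv).1

lemma scale_mem_costSet {v : X → ℝ} {c t : ℝ} (ht : 0 < t) (hc : c ∈ costSet ρ v) :
    t * c ∈ costSet ρ (t • v) := by
  obtain ⟨ψ, h1, h2, h3, rfl⟩ := hc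
  refine ⟨fun a b => t * ψ a b, fun a b => mul_nonneg ht.le (h1 a b), ?_, ?_, ?_⟩
  · intro x
    rw [← Finset.mul_sum, h2 x, Pi.smul_apply, smul_eq_mul]
    rw [mul_max_of_nonneg _ _ ht.le, mul_zero]
  · intro y
    rw [← Finset.mul_sum, h3 y, Pi.smul_apply, smul_eq_mul]
    rw [mul_max_of_nonneg _ _ ht.le, mul_zero, mul_neg]
  · rw [Finset.mul_sum]
    refine Finset.sum_congr rfl fun a _ => ?_
    rw [Finset.mul_sum]
    refine Finset.sum_congr rfl fun b _ => ?_
    ring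

lemma sInf_costSet_smul (hpos : ∀ x y : X, x ≠ y → 0 < ρ x y)
    (hzero : ∀ x : X, ρ x x = 0) {v : X → ℝ} (hv : ∑ x : X, v x = 0)
    {t : ℝ} (ht : 0 < t) :
    sInf (costSet ρ (t • v)) = t * sInf (costSet ρ v) := by
  have hv' : ∑ x : X, (t • v) x = 0 := by
    simp only [Pi.smul_apply, smul_eq_mul, ← Finset.mul_sum, hv, mul_zero]
  have h1 := isLeast_sInf_costSet hpos hzero hv
  have h2 := isLeast_sInf_costSet hpos hzero hv'
  refine le_antisymm (h2.2 (scale_mem_costSet ht h1.1)) ?_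
  have h3 : t⁻¹ * sInf (costSet ρ (t • v)) ∈ costSet ρ (t⁻¹ • t • v) :=
    scale_mem_costSet (inv_pos.2 ht) h2.1
  rw [smul_smul, inv_mul_cancel₀ ht.ne', one_smul] at h3
  have := h1.2 h3
  calc t * sInf (costSet ρ v) ≤ t * (t⁻¹ * sInf (costSet ρ (t • v))) :=
        mul_le_mul_of_nonneg_left this ht.le
    _ = sInf (costSet ρ (t • v)) := by field_simp

lemma sInf_costSet_add (hpos : ∀ x y : X, x ≠ y → 0 < ρ x y)
    (hzero : ∀ x : X, ρ x x = 0) (htri : ∀ x y z : X, ρ x z ≤ ρ x y + ρ y z)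
    {v₁ v₂ : X → ℝ} (hv₁ : ∑ x : X, v₁ x = 0) (hv₂ : ∑ x : X, v₂ x = 0) :
    sInf (costSet ρ (v₁ + v₂)) ≤ sInf (costSet ρ v₁) + sInf (costSet ρ v₂) := by
  obtain ⟨ψ₁, a1, a2, a3, ha⟩ := (isLeast_sInf_costSet hpos hzero hv₁).1
  obtain ⟨ψ₂, b1, b2, b3, hb⟩ := (isLeast_sInf_costSet hpos hzero hv₂).1
  have hv' : ∑ x : X, (v₁ + v₂) x = 0 := by
    simp only [Pi.add_apply, Finset.sum_add_distrib, hv₁, hv₂, add_zero]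
  have hnet : ∀ x : X, (∑ y : X, (ψ₁ x y + ψ₂ x y)) - (∑ y : X, (ψ₁ y x + ψ₂ y x))
      = (v₁ + v₂) x := by
    intro x
    simp only [Finset.sum_add_distrib, a2 x, b2 x, a3 x, b3 x, Pi.add_apply]
    have e1 := pos_sub_neg (v₁ x)
    have e2 := pos_sub_neg (v₂ x)
    linarith
  obtain ⟨c, hc, hle⟩ := toPlan hzero htri (fun a b => ψ₁ a b + ψ₂ a b)
    (fun a b => add_nonneg (a1 a b) (b1 a b)) (v₁ + v₂) hnet
  refine le_trans ((isLeast_sInf_costSet hpos hzero hv').2 hc) (hle.trans ?_)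
  rw [ha, hb]
  rw [← Finset.sum_add_distrib]
  refine le_of_eq (Finset.sum_congr rfl fun a _ => ?_)
  rw [← Finset.sum_add_distrib]
  refine Finset.sum_congr rfl fun b _ => ?_
  ring


lemma pair_mem_costSet (hzero : ∀ x : X, ρ x x = 0) (x y : X) :
    ρ x y ∈ costSet ρ ((fun j => if x = j then (1:ℝ) else 0)
      - fun j => if y = j then (1:ℝ) else 0) := by
  rcases eq_or_ne x y with rfl | hxy
  · refine ⟨fun _ _ => 0, fun a b => le_rfl, ?_, ?_, ?_⟩ <;>
      simp [hzero, Pi.sub_apply]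
  · refine ⟨fun a b => if a = x ∧ b = y then 1 else 0, ?_, ?_, ?_, ?_⟩
    · intro a b; dsimp only; split_ifs <;> norm_num
    · intro a
      rw [row_ite]
      simp only [Pi.sub_apply]
      rcases eq_or_ne a x with rfl | hax
      · simp [hxy.symm, Ne.symm hxy]
      · simp only [if_neg hax, if_neg (fun h : x = a => hax h.symm)]
        rcases eq_or_ne y a with h | h <;> simp [h]
    · intro b
      rw [col_ite]
      simp only [Pi.sub_apply]
      rcases eq_or_ne b y with rfl | hby
      · simp [hxy, Ne.symm hxy]
      · simp only [if_neg hby, if_neg (fun h : y = b => hby h.symm)]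
        rcases eq_or_ne x b with h | h <;> simp [h]
    · have expand : ∀ a b : X, ρ a b * (if a = x ∧ b = y then (1:ℝ) else 0)
          = (if a = x ∧ b = y then ρ a b * 1 else 0) := by
        intro a b; rw [mul_ite, mul_zero]
      simp only [expand]
      rw [tot_ite, mul_one]

lemma exists_optimal_potential (hsymm : ∀ x y : X, ρ x y = ρ y x)
    (hpos : ∀ x y : X, x ≠ y → 0 < ρ x y) (hzero : ∀ x : X, ρ x x = 0)
    (htri : ∀ x y z : X, ρ x z ≤ ρ x y + ρ y z)
    {v : X → ℝ} (hv : ∑ x : X, v x = 0) :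
    ∃ f : X → ℝ, (∀ x y : X, |f x - f y| ≤ ρ x y) ∧
      ∑ x : X, f x * v x = sInf (costSet ρ v) := by
  classical
  rcases isEmpty_or_nonempty X with hX | hX
  · refine ⟨fun _ => 0, fun x => (IsEmpty.false x).elim, ?_⟩
    have h1 : costSet ρ v = {0} := by
      ext c
      simp only [costSet, Set.mem_setOf_eq, Set.mem_singleton_iff]
      constructor
      · rintro ⟨ψ, -, -, -, rfl⟩; simp
      · rintro rfl
        exact ⟨fun _ _ => 0, fun a b => le_rfl, fun x => (IsEmpty.false x).elim,
          fun y => (IsEmpty.false y).elim, by simp⟩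
    rw [h1, csInf_singleton]
    simp
  rcases eq_or_ne v 0 with rfl | hv0
  · refine ⟨fun _ => 0, fun x y => by simpa using rho_nonneg hpos hzero x y, ?_⟩
    have h0 : (0:ℝ) ∈ costSet ρ (0 : X → ℝ) :=
      ⟨fun _ _ => 0, fun a b => le_rfl, by simp, by simp, by simp⟩
    have hle := (isLeast_sInf_costSet hpos hzero (v := (0 : X → ℝ)) (by simp)).2 h0
    have hge := sInf_costSet_nonneg hpos hzero (v := (0 : X → ℝ)) (by simp)
    have : sInf (costSet ρ (0 : X → ℝ)) = 0 := le_antisymm hle hge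
    simp [this]
  -- main case : Hahn-Banach
  set n : ℝ := (Fintype.card X : ℝ) with hn'
  have hn : 0 < n := by
    simp only [hn']
    exact_mod_cast Fintype.card_pos
  set π : (X → ℝ) → (X → ℝ) := fun u a => u a - (∑ x : X, u x) / n with hπ
  have hπsum : ∀ u : X → ℝ, ∑ a : X, π u a = 0 := by
    intro u
    simp only [hπ]
    rw [Finset.sum_sub_distrib, Finset.sum_const, card_univ, nsmul_eq_mul]
    field_simp
    simp [hn']
  have hπfix : ∀ u : X → ℝ, (∑ a : X, u a) = 0 → π u = u := by
    intro u hu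
    funext a
    simp [hπ, hu]
  set N : (X → ℝ) → ℝ := fun u => sInf (costSet ρ (π u)) with hN
  have hNhom : ∀ c : ℝ, 0 < c → ∀ u : X → ℝ, N (c • u) = c * N u := by
    intro c hc u
    have hπc : π (c • u) = c • π u := by
      funext a
      simp only [hπ, Pi.smul_apply, smul_eq_mul]
      rw [← Finset.mul_sum]
      ring
    simp only [hN, hπc]
    exact sInf_costSet_smul hpos hzero (hπsum u) hc
  have hNadd : ∀ u w : X → ℝ, N (u + w) ≤ N u + N w := by
    intro u w
    have hπa : π (u + w) = π u + π w := by
      funext a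
      simp only [hπ, Pi.add_apply, Finset.sum_add_distrib]
      ring
    simp only [hN, hπa]
    exact sInf_costSet_add hpos hzero htri (hπsum u) (hπsum w)
  set C : ℝ := sInf (costSet ρ v) with hC
  set f₀ : (X → ℝ) →ₗ.[ℝ] ℝ := LinearPMap.mkSpanSingleton v C hv0 with hf₀'
  have hC0 : 0 ≤ C := sInf_costSet_nonneg hpos hzero hv
  have hf₀ : ∀ t : f₀.domain, f₀ t ≤ N ↑t := by
    rintro ⟨t, ht⟩
    have ht' : t ∈ Submodule.span ℝ {v} := ht
    obtain ⟨c, hc⟩ := Submodule.mem_span_singleton.1 ht'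
    subst hc
    have happ : f₀ ⟨c • v, ht⟩ = c • C := LinearPMap.mkSpanSingleton'_apply _ _ _ c ht
    rw [happ, smul_eq_mul]
    have hsumc : ∑ a : X, (c • v) a = 0 := by
      simp only [Pi.smul_apply, smul_eq_mul, ← Finset.mul_sum, hv, mul_zero]
    rcases lt_trichotomy c 0 with hc0 | rfl | hc0
    · have hsumn : ∑ a : X, (-v) a = 0 := by simp [hv]
      have hrw : c • v = (-c) • (-v) := by
        funext a; simp only [Pi.smul_apply, Pi.neg_apply, smul_eq_mul]; ring
      have : N (c • v) = (-c) * sInf (costSet ρ (-v)) := by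
        simp only [hN, hπfix _ hsumc]
        rw [hrw]
        exact sInf_costSet_smul hpos hzero hsumn (neg_pos.2 hc0)
      rw [this]
      have g2 : 0 ≤ sInf (costSet ρ (-v)) := sInf_costSet_nonneg hpos hzero hsumn
      nlinarith
    · have h00 : ∑ a : X, (0 : X → ℝ) a = 0 := by simp
      have : N ((0:ℝ) • v) = sInf (costSet ρ (0 : X → ℝ)) := by
        simp only [hN, zero_smul, hπfix _ h00]
      rw [this, zero_mul]
      exact sInf_costSet_nonneg hpos hzero h00
    · have : N (c • v) = c * C := by
        simp only [hN, hπfix _ hsumc, hC]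
        exact sInf_costSet_smul hpos hzero hv hc0
      rw [this]
  obtain ⟨g, hg1, hg2⟩ := exists_extension_of_le_sublinear f₀ N hNhom hNadd hf₀
  set e : X → (X → ℝ) := fun i j => if i = j then (1:ℝ) else 0 with he
  set f : X → ℝ := fun a => g (e a) with hf
  have hsum_e : ∀ x y : X, ∑ a : X, (e x - e y) a = 0 := by
    intro x y
    simp only [Pi.sub_apply, Finset.sum_sub_distrib, he]
    simp
  have hlip1 : ∀ x y : X, f x - f y ≤ ρ x y := by
    intro x y
    have h1 : f x - f y = g (e x - e y) := by rw [map_sub]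
    rw [h1]
    refine le_trans (hg2 _) ?_
    have h2 : N (e x - e y) = sInf (costSet ρ (e x - e y)) := by
      simp only [hN, hπfix _ (hsum_e x y)]
    rw [h2]
    exact (isLeast_sInf_costSet hpos hzero (hsum_e x y)).2 (pair_mem_costSet hzero x y)
  refine ⟨f, fun x y => abs_sub_le_iff.2 ⟨hlip1 x y, by rw [hsymm x y]; exact hlip1 y x⟩, ?_⟩
  have hrep : g v = ∑ a : X, v a * f a := by
    conv_lhs => rw [pi_eq_sum_univ v]
    rw [map_sum]
    refine Finset.sum_congr rfl fun a _ => ?_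
    rw [map_smul, smul_eq_mul, hf]
  have hgv : g v = C := by
    have hmem : v ∈ Submodule.span ℝ {v} := Submodule.mem_span_singleton_self v
    have := hg1 ⟨v, hmem⟩
    rw [this]
    exact LinearPMap.mkSpanSingleton_apply ℝ ℝ hv0 C
  rw [← hgv, hrep]
  refine Finset.sum_congr rfl fun a _ => ?_
  ring

end OT

theorem stmt_15 (X : Type*) [Fintype X] [DecidableEq X]
    (ρ : X → X → ℝ)
    (hsymm : ∀ x y : X, ρ x y = ρ y x)
    (hpos : ∀ x y : X, x ≠ y → 0 < ρ x y)
    (hzero : ∀ x : X, ρ x x = 0)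
    (htri : ∀ x y z : X, ρ x z ≤ ρ x y + ρ y z)
    (v : X → ℝ) (hv : ∑ x : X, v x = 0) :
    ∃ C : ℝ,
      IsLeast {c : ℝ | ∃ ψ : X → X → ℝ,
          (∀ x y : X, 0 ≤ ψ x y) ∧
          (∀ x : X, ∑ y : X, ψ x y = max (v x) 0) ∧
          (∀ y : X, ∑ x : X, ψ x y = max (-v y) 0) ∧
          c = ∑ x : X, ∑ y : X, ρ x y * ψ x y} C ∧
      IsGreatest {s : ℝ | ∃ f : X → ℝ,
          (∀ x y : X, |f x - f y| ≤ ρ x y) ∧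
          s = ∑ x : X, f x * v x} C := by
  obtain ⟨C, hC⟩ := exists_least_costSet (ρ := ρ) hpos hzero hv
  obtain ⟨f, hf, hfv⟩ := exists_optimal_potential hsymm hpos hzero htri hv
  refine ⟨C, hC, ⟨f, hf, ?_⟩, ?_⟩
  · rw [hfv, hC.csInf_eq]
  · rintro s ⟨f', hf', rfl⟩
    exact weak_duality hf' hC.1
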